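/- Suppose B(1,1) ≤ B̄ < B(K,1), and let k* ∈ {1, …, K−1} satisfy B(k*,1) ≤ B̄ < B(k*+1,1). Then there is a unique x* ∈ [c_{k*}/c_{k*+1}, 1] such that B(k*, x*) = B̄. -/

import Mathlib

/-- if `B(1,1) ≤ B̄ < B(K,1)` and `k* ∈ {1,…,K−1}` satisfies
`B(k*,1) ≤ B̄ < B(k*+1,1)`, then there is a unique `x* ∈ [c_{k*}/c_{k*+1}, 1]` with
`B(k*, x*) = B̄`. Costs are indexed by `{1, …, K}`. -/
theorem unique_xstar
    (K : ℕ) (hK : 2 ≤ K) (c π : ℕ → ℝ) (Q R B : ℕ → ℝ → ℝ) (Bbar : ℝ)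
    (hc : ∀ t ∈ Finset.Icc 1 K, 0 < c t)
    (hcmono : ∀ j ∈ Finset.Icc 1 (K - 1), c j < c (j + 1))
    (hπpos : ∀ t ∈ Finset.Icc 1 K, 0 < π t)
    (hπsum : ∑ t ∈ Finset.Icc 1 K, π t = 1)
    (hQ : ∀ k ∈ Finset.Icc 1 K, ∀ x ∈ Set.Ioc (0 : ℝ) 1,
      Q k x = (∑ t ∈ Finset.Icc 1 k, π t * c t)
        + ∑ t ∈ Finset.Icc (k + 1) K, π t * Real.sqrt (c t * c k / x))
    (hR : ∀ k ∈ Finset.Icc 1 K, ∀ x ∈ Set.Ioc (0 : ℝ) 1,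
      R k x = 2 * ((∑ t ∈ Finset.Icc 1 k, π t * c t * x / c k)
        + ∑ t ∈ Finset.Icc (k + 1) K, π t))
    (hB : ∀ k ∈ Finset.Icc 1 K, ∀ x ∈ Set.Ioc (0 : ℝ) 1,
      B k x = Q k x / R k x)
    (hBbar_lb : B 1 1 ≤ Bbar) (hBbar_ub : Bbar < B K 1)
    (kstar : ℕ) (hkstar : kstar ∈ Finset.Icc 1 (K - 1))
    (hkstar_lb : B kstar 1 ≤ Bbar) (hkstar_ub : Bbar < B (kstar + 1) 1) :
    ∃! xstar : ℝ, xstar ∈ Set.Icc (c kstar / c (kstar + 1)) 1 ∧ B kstar xstar = Bbar := by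
  obtain ⟨hk1, hkK1⟩ := Finset.mem_Icc.mp hkstar
  set k := kstar with hkdef
  have hk1K : k + 1 ≤ K := by omega
  have hkmem : k ∈ Finset.Icc 1 K := Finset.mem_Icc.mpr ⟨hk1, by omega⟩
  have hk1mem : (k + 1) ∈ Finset.Icc 1 K := Finset.mem_Icc.mpr ⟨by omega, hk1K⟩
  have hck : 0 < c k := hc k hkmem
  have hck1 : 0 < c (k + 1) := hc (k + 1) hk1mem
  have hclt : c k < c (k + 1) := hcmono k hkstar
  set a := c k / c (k + 1) with hadef
  have ha0 : 0 < a := div_pos hck hck1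
  have ha1 : a < 1 := (div_lt_one hck1).mpr hclt
  have hcposlo : ∀ t ∈ Finset.Icc 1 k, 0 < c t := fun t ht => hc t (by
    simp only [Finset.mem_Icc] at ht ⊢; omega)
  have hcposhi : ∀ t ∈ Finset.Icc (k + 1) K, 0 < c t := fun t ht => hc t (by
    simp only [Finset.mem_Icc] at ht ⊢; omega)
  have hπposlo : ∀ t ∈ Finset.Icc 1 k, 0 < π t := fun t ht => hπpos t (by
    simp only [Finset.mem_Icc] at ht ⊢; omega)
  have hπposhi : ∀ t ∈ Finset.Icc (k + 1) K, 0 < π t := fun t ht => hπpos t (by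
    simp only [Finset.mem_Icc] at ht ⊢; omega)
  have hlo_ne : (Finset.Icc 1 k).Nonempty := Finset.nonempty_Icc.mpr hk1
  have hhi_ne : (Finset.Icc (k + 1) K).Nonempty := Finset.nonempty_Icc.mpr hk1K
  set N : ℝ → ℝ := fun x => (∑ t ∈ Finset.Icc 1 k, π t * c t)
      + ∑ t ∈ Finset.Icc (k + 1) K, π t * Real.sqrt (c t * c k / x) with hNdef
  set D : ℝ → ℝ := fun x => 2 * ((∑ t ∈ Finset.Icc 1 k, π t * c t * x / c k)
      + ∑ t ∈ Finset.Icc (k + 1) K, π t) with hDdef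
  have hBf : ∀ x ∈ Set.Ioc (0 : ℝ) 1, B k x = N x / D x := fun x hx => by
    rw [hB k hkmem x hx, hQ k hkmem x hx, hR k hkmem x hx]
  have hSpos : 0 < ∑ t ∈ Finset.Icc 1 k, π t * c t :=
    Finset.sum_pos (fun t ht => mul_pos (hπposlo t ht) (hcposlo t ht)) hlo_ne
  have hNpos : ∀ x : ℝ, 0 < N x := fun x => by
    have : 0 ≤ ∑ t ∈ Finset.Icc (k + 1) K, π t * Real.sqrt (c t * c k / x) :=
      Finset.sum_nonneg fun t ht => mul_nonneg (hπposhi t ht).le (Real.sqrt_nonneg _)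
    simp only [hNdef]; linarith
  have hDpos : ∀ x : ℝ, 0 < x → 0 < D x := fun x hx => by
    have h1 : 0 ≤ ∑ t ∈ Finset.Icc 1 k, π t * c t * x / c k :=
      Finset.sum_nonneg fun t ht => div_nonneg
        (mul_nonneg (mul_nonneg (hπposlo t ht).le (hcposlo t ht).le) hx.le) hck.le
    have h2 : 0 < ∑ t ∈ Finset.Icc (k + 1) K, π t :=
      Finset.sum_pos hπposhi hhi_ne
    simp only [hDdef]; linarith
  -- strict antitonicity of N/D on Icc a 1
  have hanti : StrictAntiOn (fun x => N x / D x) (Set.Icc a 1) := by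
    intro x hx y hy hxy
    have hx0 : 0 < x := lt_of_lt_of_le ha0 hx.1
    have hy0 : 0 < y := lt_of_lt_of_le ha0 hy.1
    have hNlt : N y < N x := by
      have : (∑ t ∈ Finset.Icc (k + 1) K, π t * Real.sqrt (c t * c k / y))
          < ∑ t ∈ Finset.Icc (k + 1) K, π t * Real.sqrt (c t * c k / x) := by
        refine Finset.sum_lt_sum (fun t ht => ?_) ⟨k + 1, Finset.mem_Icc.mpr ⟨le_refl _, hk1K⟩, ?_⟩
        · refine mul_le_mul_of_nonneg_left (Real.sqrt_le_sqrt ?_) (hπposhi t ht).le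
          exact div_le_div_of_nonneg_left (mul_pos (hcposhi t ht) hck).le hx0 hxy.le
        · refine mul_lt_mul_of_pos_left (Real.sqrt_lt_sqrt ?_ ?_)
            (hπposhi _ (Finset.mem_Icc.mpr ⟨le_refl _, hk1K⟩))
          · positivity
          · exact div_lt_div_of_pos_left (mul_pos hck1 hck) hx0 hxy
      simp only [hNdef]; linarith
    have hDlt : D x < D y := by
      have : (∑ t ∈ Finset.Icc 1 k, π t * c t * x / c k)
          < ∑ t ∈ Finset.Icc 1 k, π t * c t * y / c k := by
        refine Finset.sum_lt_sum_of_nonempty hlo_ne fun t ht => ?_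
        have h1 : 0 < π t * c t := mul_pos (hπposlo t ht) (hcposlo t ht)
        have := mul_lt_mul_of_pos_left hxy h1
        exact div_lt_div_of_pos_right (mul_lt_mul_of_pos_left hxy h1) hck
      simp only [hDdef]; linarith
    calc N y / D y < N y / D x := div_lt_div_of_pos_left (hNpos y) (hDpos x hx0) hDlt
      _ ≤ N x / D x := div_le_div_of_nonneg_right hNlt.le (hDpos x hx0).le
  -- continuity
  have hcont : ContinuousOn (fun x => N x / D x) (Set.Icc a 1) := by
    have hne0 : ∀ x ∈ Set.Icc a 1, x ≠ 0 := fun x hx => (lt_of_lt_of_le ha0 hx.1).ne'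
    have hcN : ContinuousOn N (Set.Icc a 1) := by
      refine continuousOn_const.add (continuousOn_finset_sum _ fun t ht => ?_)
      exact continuousOn_const.mul
        ((Real.continuous_sqrt.comp_continuousOn
          (continuousOn_const.div continuousOn_id hne0)))
    have hcD : ContinuousOn D (Set.Icc a 1) := by
      refine continuousOn_const.mul (ContinuousOn.add (continuousOn_finset_sum _ fun t ht => ?_)
        continuousOn_const)
      exact (continuousOn_const.mul continuousOn_id).div_const _
    exact hcN.div hcD fun x hx => (hDpos x (lt_of_lt_of_le ha0 hx.1)).ne'
  -- endpoints
  have h1mem : (1 : ℝ) ∈ Set.Ioc (0 : ℝ) 1 := ⟨one_pos, le_refl _⟩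
  have hamem : a ∈ Set.Ioc (0 : ℝ) 1 := ⟨ha0, ha1.le⟩
  have hf1 : N 1 / D 1 = B k 1 := (hBf 1 h1mem).symm
  -- key: N a / D a = B (k+1) 1
  have hsplit : Finset.Icc (k + 1) K = insert (k + 1) (Finset.Icc (k + 2) K) := by
    ext t; simp only [Finset.mem_Icc, Finset.mem_insert]; omega
  have hnotmem : (k + 1) ∉ Finset.Icc (k + 2) K := by simp
  have hfa : N a / D a = B (k + 1) 1 := by
    rw [hB (k + 1) hk1mem 1 h1mem, hQ (k + 1) hk1mem 1 h1mem, hR (k + 1) hk1mem 1 h1mem]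
    have harg : ∀ t, c t * c k / a = c t * c (k + 1) := fun t => by
      rw [hadef]; field_simp
    have hNa : N a = (∑ t ∈ Finset.Icc 1 (k + 1), π t * c t)
        + ∑ t ∈ Finset.Icc (k + 2) K, π t * Real.sqrt (c t * c (k + 1) / 1) := by
      simp only [hNdef]
      rw [Finset.sum_Icc_succ_top (by omega : 1 ≤ k + 1), hsplit, Finset.sum_insert hnotmem]
      have h1 : Real.sqrt (c (k + 1) * c k / a) = c (k + 1) := by
        rw [harg, Real.sqrt_mul_self hck1.le]
      rw [h1]
      have h2 : ∀ t ∈ Finset.Icc (k + 2) K,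
          π t * Real.sqrt (c t * c k / a) = π t * Real.sqrt (c t * c (k + 1) / 1) := by
        intro t ht; rw [harg, div_one]
      rw [Finset.sum_congr rfl h2]; ring
    have hDa : D a = 2 * ((∑ t ∈ Finset.Icc 1 (k + 1), π t * c t * 1 / c (k + 1))
        + ∑ t ∈ Finset.Icc (k + 2) K, π t) := by
      simp only [hDdef]
      rw [Finset.sum_Icc_succ_top (by omega : 1 ≤ k + 1), hsplit, Finset.sum_insert hnotmem]
      have h1 : ∀ t ∈ Finset.Icc 1 k,
          π t * c t * a / c k = π t * c t * 1 / c (k + 1) := by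
        intro t ht; rw [hadef]; field_simp
      rw [Finset.sum_congr rfl h1]
      have h2 : π (k + 1) * c (k + 1) * 1 / c (k + 1) = π (k + 1) := by field_simp
      rw [h2]; ring
    rw [hNa, hDa]
  -- existence via IVT
  have hBbar_mem : Bbar ∈ Set.Icc (N 1 / D 1) (N a / D a) := by
    constructor
    · rw [hf1]; exact hkstar_lb
    · rw [hfa]; exact hkstar_ub.le
  obtain ⟨x, hxmem, hfx⟩ := intermediate_value_Icc' ha1.le hcont hBbar_mem
  refine ⟨x, ⟨hxmem, ?_⟩, ?_⟩
  · rw [hBf x ⟨lt_of_lt_of_le ha0 hxmem.1, hxmem.2⟩]; exact hfx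
  · rintro y ⟨hymem, hyB⟩
    have hfy : N y / D y = Bbar := by
      rw [← hBf y ⟨lt_of_lt_of_le ha0 hymem.1, hymem.2⟩]; exact hyB
    exact hanti.injOn hymem hxmem (hfy.trans hfx.symm)
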